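/- arXiv:1505.04008 — 3 statements merged into one kernel-verified Lean document; each statement's English description precedes it below -/
import Mathlib

section
/- Let X be an n×p real matrix of full column rank, A₀ a (p−q)×p matrix of full row rank, and A¹ a p×q matrix whose columns span the null space of A₀. Define H_F = X(XᵀX)⁻¹Xᵀ, Z₁ = XA¹, H_M = Z₁(Z₁ᵀZ₁)⁻¹Z₁ᵀ, and H̄_M = X(XᵀX)⁻¹A₀ᵀ(A₀(XᵀX)⁻¹A₀ᵀ)⁻¹A₀(XᵀX)⁻¹Xᵀ. Then H̄_M = H_F − H_M. -/
open Matrix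

lemma mulVec_inj_of_rank {a b : ℕ} (M : Matrix (Fin a) (Fin b) ℝ) (h : M.rank = b) :
    Function.Injective M.mulVec := by
  rw [show M.mulVec = M.mulVecLin from rfl, ← LinearMap.ker_eq_bot (f := M.mulVecLin)]
  have h1 := LinearMap.finrank_range_add_finrank_ker M.mulVecLin
  rw [show Module.finrank ℝ (Fin b → ℝ) = b by simp] at h1
  have h2 : M.rank = Module.finrank ℝ (LinearMap.range M.mulVecLin) := rfl
  exact Submodule.finrank_eq_zero.mp (by omega)

lemma posDef_transpose_mul_self {a b : ℕ} (M : Matrix (Fin a) (Fin b) ℝ)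
    (h : Function.Injective M.mulVec) : (Mᵀ * M).PosDef := by
  refine PosDef.of_dotProduct_mulVec_pos (posSemidef_conjTranspose_mul_self M).isHermitian fun x hx => ?_
  have hMx : M *ᵥ x ≠ 0 := fun hc => hx (h (by simpa using hc))
  have e : star x ⬝ᵥ (Mᵀ * M) *ᵥ x = (M *ᵥ x) ⬝ᵥ (M *ᵥ x) := by
    rw [star_trivial, ← mulVec_mulVec, dotProduct_mulVec, vecMul_transpose]
  rw [e]
  have := dotProduct_self_star_pos_iff (v := M *ᵥ x) |>.mpr hMx
  simpa using this

lemma posDef_mul_mul_transpose {a b : ℕ} (S : Matrix (Fin a) (Fin a) ℝ) (hS : S.PosDef)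
    (C : Matrix (Fin b) (Fin a) ℝ) (h : Function.Injective Cᵀ.mulVec) :
    (C * S * Cᵀ).PosDef := by
  have hsemi : (C * S * Cᵀ).PosSemidef := by
    have := hS.posSemidef.mul_mul_conjTranspose_same C
    simpa using this
  refine PosDef.of_dotProduct_mulVec_pos hsemi.isHermitian fun x hx => ?_
  have hCx : Cᵀ *ᵥ x ≠ 0 := fun hc => hx (h (by simpa using hc))
  have e : star x ⬝ᵥ (C * S * Cᵀ) *ᵥ x = star (Cᵀ *ᵥ x) ⬝ᵥ S *ᵥ (Cᵀ *ᵥ x) := by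
    rw [star_trivial, star_trivial, ← mulVec_mulVec, ← mulVec_mulVec,
      dotProduct_mulVec x C, ← mulVec_transpose]
  rw [e]
  exact hS.dotProduct_mulVec_pos hCx

lemma key_identity {p q r : ℕ} (hpq : q + r = p)
    (S : Matrix (Fin p) (Fin p) ℝ) (hS : S.PosDef)
    (A0 : Matrix (Fin r) (Fin p) ℝ) (hA0 : A0.rank = r)
    (A1 : Matrix (Fin p) (Fin q) ℝ)
    (hG : IsUnit (A1ᵀ * (S * A1)).det)
    (hnull : A0 * A1 = 0) :
    S⁻¹ * (A0ᵀ * ((A0 * (S⁻¹ * A0ᵀ))⁻¹ * (A0 * S⁻¹))) =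
      S⁻¹ - A1 * ((A1ᵀ * (S * A1))⁻¹ * A1ᵀ) := by
  have hSd : IsUnit S.det := (isUnit_iff_isUnit_det _).mp hS.isUnit
  have hSi : S⁻¹.PosDef := hS.inv
  have hA0t : Function.Injective A0ᵀ.mulVec :=
    mulVec_inj_of_rank A0ᵀ (by rw [rank_transpose, hA0])
  have hW : (A0 * S⁻¹ * A0ᵀ).PosDef := posDef_mul_mul_transpose S⁻¹ hSi A0 hA0t
  have hWd : IsUnit (A0 * (S⁻¹ * A0ᵀ)).det := by
    rw [← Matrix.mul_assoc]; exact (isUnit_iff_isUnit_det _).mp hW.isUnit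
  have htr : A1ᵀ * A0ᵀ = 0 := by rw [← transpose_mul, hnull, transpose_zero]
  have h11 : ((A1ᵀ * (S * A1))⁻¹ * A1ᵀ) * (S * A1) = 1 := by
    rw [Matrix.mul_assoc]; exact nonsing_inv_mul _ hG
  have h12 : ((A1ᵀ * (S * A1))⁻¹ * A1ᵀ) * A0ᵀ = 0 := by
    rw [Matrix.mul_assoc, htr, Matrix.mul_zero]
  have h21 : ((A0 * (S⁻¹ * A0ᵀ))⁻¹ * (A0 * S⁻¹)) * (S * A1) = 0 := by
    simp only [Matrix.mul_assoc, Matrix.nonsing_inv_mul_cancel_left _ _ hSd]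
    rw [hnull, Matrix.mul_zero]
  have h22 : ((A0 * (S⁻¹ * A0ᵀ))⁻¹ * (A0 * S⁻¹)) * A0ᵀ = 1 := by
    simp only [Matrix.mul_assoc]; exact nonsing_inv_mul _ hWd
  have hRT : fromRows ((A1ᵀ * (S * A1))⁻¹ * A1ᵀ) ((A0 * (S⁻¹ * A0ᵀ))⁻¹ * (A0 * S⁻¹)) *
      fromCols (S * A1) A0ᵀ = 1 := by
    rw [fromRows_mul_fromCols, h11, h12, h21, h22, fromBlocks_one]
  have e : Fin p ≃ Fin q ⊕ Fin r := (finCongr hpq.symm).trans finSumFinEquiv.symm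
  have hTR := (fromCols_mul_fromRows_eq_one_comm e (S * A1) A0ᵀ _ _).mpr hRT
  rw [fromCols_mul_fromRows] at hTR
  have h2 := congrArg (fun M => S⁻¹ * M) hTR
  simp only [Matrix.mul_add, Matrix.mul_one, Matrix.mul_assoc,
    Matrix.nonsing_inv_mul_cancel_left _ _ hSd] at h2
  exact eq_sub_of_add_eq' h2

/-- H̄_M = H_F − H_M. -/
theorem stmt3 (n p q r : ℕ) (hpq : q + r = p)
    (X : Matrix (Fin n) (Fin p) ℝ) (hX : X.rank = p)
    (A0 : Matrix (Fin r) (Fin p) ℝ) (hA0 : A0.rank = r)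
    (A1 : Matrix (Fin p) (Fin q) ℝ) (hA1 : A1.rank = q)
    (hnull : A0 * A1 = 0) :
    X * (Xᵀ * X)⁻¹ * A0ᵀ * (A0 * (Xᵀ * X)⁻¹ * A0ᵀ)⁻¹ * A0 * (Xᵀ * X)⁻¹ * Xᵀ =
      X * (Xᵀ * X)⁻¹ * Xᵀ - (X * A1) * (((X * A1)ᵀ * (X * A1))⁻¹) * (X * A1)ᵀ := by
  have hXi := mulVec_inj_of_rank X hX
  have hA1i := mulVec_inj_of_rank A1 hA1
  have hS : (Xᵀ * X).PosDef := posDef_transpose_mul_self X hXi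
  have hXA1i : Function.Injective (X * A1).mulVec := by
    have : (X * A1).mulVec = X.mulVec ∘ A1.mulVec := by
      funext v; simp [mulVec_mulVec]
    rw [this]; exact hXi.comp hA1i
  have hGpd := posDef_transpose_mul_self (X * A1) hXA1i
  have hGeq : (X * A1)ᵀ * (X * A1) = A1ᵀ * ((Xᵀ * X) * A1) := by
    rw [transpose_mul]; simp only [Matrix.mul_assoc]
  have hG : IsUnit (A1ᵀ * ((Xᵀ * X) * A1)).det := by
    rw [← hGeq]; exact (isUnit_iff_isUnit_det _).mp hGpd.isUnit
  have key := key_identity hpq (Xᵀ * X) hS A0 hA0 A1 hG hnull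
  have final := congrArg (fun M => X * (M * Xᵀ)) key
  simp only [Matrix.sub_mul, Matrix.mul_sub, Matrix.mul_assoc] at final
  simp only [Matrix.transpose_mul, Matrix.mul_assoc]
  exact final
end

section
/- Let X = QR be the QR decomposition of an n×p full-column-rank matrix X (Q n×p orthogonal, R p×p upper triangular invertible), and let z = Qᵀy. Consider the constrained least squares problem minimizing ‖y − Xβ‖² subject to A₀β = 0, where A₀ is a (p−q)×p matrix of full row rank. Let S = R⁻ᵀA₀ᵀ = WU be the QR decomposition of S (W p×(p−q) orthogonal, U upper triangular invertible). Then the constrained residual sum of squares equals ‖y‖² − ‖z‖² + ‖Wᵀz‖². -/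
open Matrix

lemma dpAux {n p q : ℕ} (A : Matrix (Fin n) (Fin p) ℝ) (B : Matrix (Fin n) (Fin q) ℝ)
    (u : Fin p → ℝ) (v : Fin q → ℝ) :
    (A.mulVec u) ⬝ᵥ (B.mulVec v) = u ⬝ᵥ ((Aᵀ * B).mulVec v) := by
  rw [← Matrix.mulVec_mulVec, Matrix.dotProduct_mulVec u Aᵀ, Matrix.vecMul_transpose,
    Matrix.dotProduct_mulVec]

/-- constrained RSS equals ‖y‖² − ‖z‖² + ‖Wᵀz‖². -/
theorem stmt7 (n p q : ℕ) (hq : q ≤ p)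
    (X Q : Matrix (Fin n) (Fin p) ℝ)
    (R : Matrix (Fin p) (Fin p) ℝ)
    (hQR : X = Q * R) (hXrank : X.rank = p) (hQ : Qᵀ * Q = 1)
    (hR : ∀ i j : Fin p, j < i → R i j = 0) (hRinv : IsUnit R)
    (A0 : Matrix (Fin (p - q)) (Fin p) ℝ) (hA0 : A0.rank = p - q)
    (y : Fin n → ℝ)
    (W : Matrix (Fin p) (Fin (p - q)) ℝ) (U : Matrix (Fin (p - q)) (Fin (p - q)) ℝ)
    (hW : Wᵀ * W = 1) (hU : ∀ i j : Fin (p - q), j < i → U i j = 0) (hUinv : IsUnit U)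
    (hS : (R⁻¹)ᵀ * A0ᵀ = W * U) :
    IsLeast {s : ℝ | ∃ β : Fin p → ℝ, A0.mulVec β = 0 ∧
        s = (y - X.mulVec β) ⬝ᵥ (y - X.mulVec β)}
      (y ⬝ᵥ y - (Qᵀ.mulVec y) ⬝ᵥ (Qᵀ.mulVec y)
        + (Wᵀ.mulVec (Qᵀ.mulVec y)) ⬝ᵥ (Wᵀ.mulVec (Qᵀ.mulVec y))) := by
  have hRdet : IsUnit R.det := (Matrix.isUnit_iff_isUnit_det R).mp hRinv
  have hUdet : IsUnit U.det := (Matrix.isUnit_iff_isUnit_det U).mp hUinv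
  set z : Fin p → ℝ := Qᵀ.mulVec y with hz
  set c : Fin p → ℝ := z - W.mulVec (Wᵀ.mulVec z) with hc
  have hA0eq : A0 = Uᵀ * Wᵀ * R := by
    have h1 : A0ᵀ = Rᵀ * (W * U) := by
      rw [← hS, Matrix.transpose_nonsing_inv, ← Matrix.mul_assoc,
        Matrix.mul_nonsing_inv _ (by simpa using hRdet), Matrix.one_mul]
    calc A0 = A0ᵀᵀ := (Matrix.transpose_transpose A0).symm
      _ = (Rᵀ * (W * U))ᵀ := by rw [h1]
      _ = Uᵀ * Wᵀ * R := by
          rw [Matrix.transpose_mul, Matrix.transpose_mul, Matrix.transpose_transpose,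
            Matrix.mul_assoc]
  have keyA : ∀ β : Fin p → ℝ,
      (y - X.mulVec β) ⬝ᵥ (y - X.mulVec β)
        = y ⬝ᵥ y - z ⬝ᵥ z + (z - R.mulVec β) ⬝ᵥ (z - R.mulVec β) := by
    intro β
    have h1 : X.mulVec β ⬝ᵥ X.mulVec β = R.mulVec β ⬝ᵥ R.mulVec β := by
      rw [hQR, ← Matrix.mulVec_mulVec, dpAux, hQ, Matrix.one_mulVec]
    have h2 : y ⬝ᵥ X.mulVec β = z ⬝ᵥ R.mulVec β := by
      rw [hQR, ← Matrix.mulVec_mulVec, hz, Matrix.mulVec_transpose]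
      exact Matrix.dotProduct_mulVec y Q _
    have h3 : X.mulVec β ⬝ᵥ y = z ⬝ᵥ R.mulVec β := by
      rw [dotProduct_comm, h2]
    have h4 : R.mulVec β ⬝ᵥ z = z ⬝ᵥ R.mulVec β := dotProduct_comm _ _
    simp only [sub_dotProduct, dotProduct_sub, h1, h2, h3, h4]
    ring
  have hWc : Wᵀ.mulVec c = 0 := by
    rw [hc, Matrix.mulVec_sub, Matrix.mulVec_mulVec _ Wᵀ W, hW, Matrix.one_mulVec, sub_self]
  have keyB : ∀ γ : Fin p → ℝ, Wᵀ.mulVec γ = 0 →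
      (z - γ) ⬝ᵥ (z - γ)
        = (Wᵀ.mulVec z) ⬝ᵥ (Wᵀ.mulVec z) + (c - γ) ⬝ᵥ (c - γ) := by
    intro γ hγ
    set w : Fin p → ℝ := W.mulVec (Wᵀ.mulVec z) with hw
    have hcz : c - γ = (z - γ) - w := by rw [hc]; abel
    have hww : w ⬝ᵥ w = (Wᵀ.mulVec z) ⬝ᵥ (Wᵀ.mulVec z) := by
      rw [hw, dpAux, hW, Matrix.one_mulVec]
    have hzw : z ⬝ᵥ w = (Wᵀ.mulVec z) ⬝ᵥ (Wᵀ.mulVec z) := by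
      rw [hw, Matrix.mulVec_transpose]
      exact Matrix.dotProduct_mulVec z W _
    have hγw : γ ⬝ᵥ w = 0 := by
      rw [hw, Matrix.mulVec_transpose, Matrix.dotProduct_mulVec γ W,
        ← Matrix.mulVec_transpose, ← Matrix.mulVec_transpose, hγ, zero_dotProduct]
    have hwz : w ⬝ᵥ z = (Wᵀ.mulVec z) ⬝ᵥ (Wᵀ.mulVec z) := by
      rw [dotProduct_comm, hzw]
    have hwγ : w ⬝ᵥ γ = 0 := by rw [dotProduct_comm, hγw]
    rw [hcz]
    simp only [sub_dotProduct, dotProduct_sub, hww, hzw, hγw, hwz, hwγ]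
    ring
  constructor
  · refine ⟨R⁻¹.mulVec c, ?_, ?_⟩
    · rw [hA0eq, Matrix.mulVec_mulVec,
        show Uᵀ * Wᵀ * R * R⁻¹ = Uᵀ * Wᵀ from by
          rw [Matrix.mul_assoc, Matrix.mul_nonsing_inv _ hRdet, Matrix.mul_one],
        ← Matrix.mulVec_mulVec, hWc, Matrix.mulVec_zero]
    · have hRc : R.mulVec (R⁻¹.mulVec c) = c := by
        rw [Matrix.mulVec_mulVec, Matrix.mul_nonsing_inv _ hRdet, Matrix.one_mulVec]
      rw [keyA, hRc]
      have h := keyB c hWc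
      simp only [sub_self, zero_dotProduct, add_zero] at h
      rw [h]
  · rintro s ⟨β, hβ, rfl⟩
    have h1 : Uᵀ.mulVec (Wᵀ.mulVec (R.mulVec β)) = 0 := by
      rw [hA0eq] at hβ
      rw [← hβ, Matrix.mulVec_mulVec, Matrix.mulVec_mulVec]
    have hUt : IsUnit Uᵀ.det := by rwa [Matrix.det_transpose]
    have hγ : Wᵀ.mulVec (R.mulVec β) = 0 := by
      have h2 : (Uᵀ)⁻¹.mulVec (Uᵀ.mulVec (Wᵀ.mulVec (R.mulVec β))) = 0 := by
        rw [h1, Matrix.mulVec_zero]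
      rwa [Matrix.mulVec_mulVec, Matrix.nonsing_inv_mul _ hUt, Matrix.one_mulVec] at h2
    rw [keyA, keyB _ hγ]
    have hnn : 0 ≤ (c - R.mulVec β) ⬝ᵥ (c - R.mulVec β) :=
      Finset.sum_nonneg fun i _ => mul_self_nonneg _
    linarith
end

section
/- Consider agglomerative hierarchical clustering on {1,…,p} with a symmetric dissimilarity matrix D = [d_{ij}], using a linkage criterion of the form d(C₁∪C₂, C₃) = b·min(d(C₁,C₃), d(C₂,C₃)) + (1−b)·max(d(C₁,C₃), d(C₂,C₃)) for a fixed b ∈ [0,1]. Suppose there exists a true partition P* = {C*₁,…,C*_T} such that d^true := max over clusters C*_l and i,j ∈ C*_l of d_{ij} is strictly less than d^false := min over distinct clusters C*_l, C*_m and i ∈ C*_l, j ∈ C*_m of d_{ij}. Then every merge whose result is contained in some true cluster occurs at cutting height ≤ d^true, every merge that combines elements from different true clusters occurs at cutting height ≥ d^false, and after exactly p − T merges the current partition equals P*. -/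
open Matrix

/-- Two clusters lie inside a common true cluster. -/
abbrev InSame {p : ℕ} (Pstar : Finset (Finset (Fin p))) (C C' : Finset (Fin p)) : Prop :=
  ∃ Cs ∈ Pstar, C ⊆ Cs ∧ C' ⊆ Cs

set_option maxHeartbeats 1000000 in
/-- if the dissimilarity matrix separates the true partition
(dᵗʳᵘᵉ < dᶠᵃˡˢᵉ), then under any convex-combination linkage every merge compatible
with the true partition occurs at height ≤ dᵗʳᵘᵉ, every incompatible merge at
height ≥ dᶠᵃˡˢᵉ, and after p − T merges the current partition is the true one. -/
theorem stmt12 (p T : ℕ) (hT : 0 < T) (hTp : T ≤ p)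
    (d : Fin p → Fin p → ℝ) (hdsym : ∀ i j, d i j = d j i)
    (b : ℝ) (hb0 : 0 ≤ b) (hb1 : b ≤ 1)
    (Pstar : Finset (Finset (Fin p)))
    (hPstar_card : Pstar.card = T)
    (hPstar_nonempty : ∀ C ∈ Pstar, C.Nonempty)
    (hPstar_disjoint : ∀ C ∈ Pstar, ∀ C' ∈ Pstar, C ≠ C' → Disjoint C C')
    (hPstar_cover : ∀ i : Fin p, ∃ C ∈ Pstar, i ∈ C)
    (dtrue dfalse : ℝ)
    (hdtrue : ∀ C ∈ Pstar, ∀ i ∈ C, ∀ j ∈ C, i ≠ j → d i j ≤ dtrue)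
    (hdfalse : ∀ C ∈ Pstar, ∀ C' ∈ Pstar, C ≠ C' → ∀ i ∈ C, ∀ j ∈ C', dfalse ≤ d i j)
    (hsep : dtrue < dfalse)
    -- the run of the agglomerative clustering algorithm:
    (P : ℕ → Finset (Finset (Fin p)))
    (Dist : ℕ → Finset (Fin p) → Finset (Fin p) → ℝ)
    (C₁ C₂ : ℕ → Finset (Fin p)) (h : ℕ → ℝ)
    (hP0 : P 0 = Finset.univ.image (fun i : Fin p => ({i} : Finset (Fin p))))
    (hDist0 : ∀ i j : Fin p, Dist 0 {i} {j} = d i j)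
    (hstep : ∀ s : ℕ, s + 1 < p →
      C₁ s ∈ P s ∧ C₂ s ∈ P s ∧ C₁ s ≠ C₂ s ∧
      (∀ C ∈ P s, ∀ C' ∈ P s, C ≠ C' → Dist s (C₁ s) (C₂ s) ≤ Dist s C C') ∧
      h s = Dist s (C₁ s) (C₂ s) ∧
      P (s + 1) = insert (C₁ s ∪ C₂ s) (((P s).erase (C₁ s)).erase (C₂ s)) ∧
      (∀ C ∈ P s, C ≠ C₁ s → C ≠ C₂ s →
        Dist (s + 1) (C₁ s ∪ C₂ s) C =
          b * min (Dist s (C₁ s) C) (Dist s (C₂ s) C)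
          + (1 - b) * max (Dist s (C₁ s) C) (Dist s (C₂ s) C) ∧
        Dist (s + 1) C (C₁ s ∪ C₂ s) = Dist (s + 1) (C₁ s ∪ C₂ s) C) ∧
      (∀ C ∈ P s, ∀ C' ∈ P s, C ≠ C₁ s → C ≠ C₂ s → C' ≠ C₁ s → C' ≠ C₂ s →
        Dist (s + 1) C C' = Dist s C C')) :
    (∀ s : ℕ, s + 1 < p → (∃ C ∈ Pstar, C₁ s ∪ C₂ s ⊆ C) → h s ≤ dtrue) ∧
    (∀ s : ℕ, s + 1 < p → (∀ C ∈ Pstar, ¬ (C₁ s ∪ C₂ s ⊆ C)) → dfalse ≤ h s) ∧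
    P (p - T) = Pstar := by
  classical
  have hp : 0 < p := lt_of_lt_of_le hT hTp
  -- two true clusters sharing a point are equal
  have huniq2 : ∀ Cs ∈ Pstar, ∀ Cs' ∈ Pstar, ∀ x : Fin p, x ∈ Cs → x ∈ Cs' → Cs = Cs' := by
    intro Cs hCs Cs' hCs' x hx hx'
    by_contra hne
    exact Finset.disjoint_left.mp (hPstar_disjoint Cs hCs Cs' hCs' hne) hx hx'
  have hcombo_le : ∀ x y z : ℝ, x ≤ z → y ≤ z → b * min x y + (1 - b) * max x y ≤ z := by
    intro x y z h1 h2
    have hm : min x y ≤ z := le_trans (min_le_left _ _) h1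
    have hM : max x y ≤ z := max_le h1 h2
    have e1 : b * min x y ≤ b * z := mul_le_mul_of_nonneg_left hm hb0
    have e2 : (1 - b) * max x y ≤ (1 - b) * z :=
      mul_le_mul_of_nonneg_left hM (by linarith)
    linarith
  have hcombo_ge : ∀ x y z : ℝ, z ≤ x → z ≤ y → z ≤ b * min x y + (1 - b) * max x y := by
    intro x y z h1 h2
    have hm : z ≤ min x y := le_min h1 h2
    have hM : z ≤ max x y := le_trans h1 (le_max_left _ _)
    have e1 : b * z ≤ b * min x y := mul_le_mul_of_nonneg_left hm hb0
    have e2 : (1 - b) * z ≤ (1 - b) * max x y :=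
      mul_le_mul_of_nonneg_left hM (by linarith)
    linarith
  -- a fine partition with T blocks must be the true partition
  have hfinal : ∀ Q : Finset (Finset (Fin p)), Q.card = T →
      (∀ i : Fin p, ∃ C ∈ Q, i ∈ C) →
      (∀ C ∈ Q, ∃ Cs ∈ Pstar, C ⊆ Cs) → Q = Pstar := by
    intro Q hcard hcover hfine
    choose g hg1 hg2 using hfine
    set g' : Finset (Fin p) → Finset (Fin p) :=
      fun C => if hC : C ∈ Q then g C hC else ∅ with hg'def
    have hgmem : ∀ C ∈ Q, g' C ∈ Pstar := by
      intro C hC; simp only [hg'def, dif_pos hC]; exact hg1 C hC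
    have hgsub : ∀ C (hC : C ∈ Q), C ⊆ g' C := by
      intro C hC; simp only [hg'def, dif_pos hC]; exact hg2 C hC
    have hsurj : Pstar ⊆ Q.image g' := by
      intro Cs hCs
      obtain ⟨x, hx⟩ := hPstar_nonempty Cs hCs
      obtain ⟨C, hCQ, hxC⟩ := hcover x
      have : g' C = Cs :=
        huniq2 _ (hgmem C hCQ) _ hCs x (hgsub C hCQ hxC) hx
      exact Finset.mem_image.mpr ⟨C, hCQ, this⟩
    have himg : Pstar = Q.image g' := by
      apply Finset.eq_of_subset_of_card_le hsurj
      calc (Q.image g').card ≤ Q.card := Finset.card_image_le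
        _ = Pstar.card := by rw [hcard, hPstar_card]
    have hinj : Set.InjOn g' ↑Q := by
      apply Finset.injOn_of_card_image_eq
      rw [← himg, hcard, hPstar_card]
    have hQsub : Q ⊆ Pstar := by
      intro C hC
      have hCeq : C = g' C := by
        apply Finset.Subset.antisymm (hgsub C hC)
        intro x hx
        obtain ⟨C', hC'Q, hxC'⟩ := hcover x
        have he : g' C' = g' C :=
          huniq2 _ (hgmem C' hC'Q) _ (hgmem C hC) x (hgsub C' hC'Q hxC') hx
        have : C' = C := hinj hC'Q hC he
        exact this ▸ hxC'
      rw [hCeq]; exact hgmem C hC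
    exact Finset.eq_of_subset_of_card_le hQsub (by rw [hcard, hPstar_card])
  -- pigeonhole: more than T fine blocks forces two in the same true cluster
  have hpigeon : ∀ Q : Finset (Finset (Fin p)), T < Q.card →
      (∀ C ∈ Q, ∃ Cs ∈ Pstar, C ⊆ Cs) →
      ∃ C ∈ Q, ∃ C' ∈ Q, C ≠ C' ∧ InSame Pstar C C' := by
    intro Q hcard hfine
    choose g hg1 hg2 using hfine
    set g' : Finset (Fin p) → Finset (Fin p) :=
      fun C => if hC : C ∈ Q then g C hC else ∅ with hg'def
    have hgmem : ∀ C ∈ Q, g' C ∈ Pstar := by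
      intro C hC; simp only [hg'def, dif_pos hC]; exact hg1 C hC
    have hgsub : ∀ C (hC : C ∈ Q), C ⊆ g' C := by
      intro C hC; simp only [hg'def, dif_pos hC]; exact hg2 C hC
    obtain ⟨C, hC, C', hC', hne, heq⟩ :=
      Finset.exists_ne_map_eq_of_card_lt_of_maps_to
        (by rw [hPstar_card]; exact hcard) hgmem
    exact ⟨C, hC, C', hC', hne, g' C, hgmem C hC, hgsub C hC,
      by rw [heq]; exact hgsub C' hC'⟩
  -- the main invariant
  have key : ∀ s, s < p →
      ((P s).card + s = p ∧
       (∀ C ∈ P s, C.Nonempty) ∧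
       (∀ C ∈ P s, ∀ C' ∈ P s, C ≠ C' → Disjoint C C') ∧
       (∀ i : Fin p, ∃ C ∈ P s, i ∈ C) ∧
       (∀ C ∈ P s, ∀ C' ∈ P s, C ≠ C' →
         (InSame Pstar C C' → Dist s C C' ≤ dtrue) ∧
         (¬ InSame Pstar C C' → dfalse ≤ Dist s C C')) ∧
       (s ≤ p - T → ∀ C ∈ P s, ∃ Cs ∈ Pstar, C ⊆ Cs) ∧
       (p - T ≤ s → ∀ C ∈ P s, ∀ Cs ∈ Pstar, ¬ Disjoint Cs C → Cs ⊆ C)) := by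
    intro s
    induction s with
    | zero =>
      intro _
      have hmem0 : ∀ C, C ∈ P 0 ↔ ∃ i : Fin p, C = {i} := by
        intro C
        simp only [hP0, Finset.mem_image, Finset.mem_univ, true_and]
        exact ⟨fun ⟨i, hi⟩ => ⟨i, hi.symm⟩, fun ⟨i, hi⟩ => ⟨i, hi.symm⟩⟩
      have hcard0 : (P 0).card = p := by
        rw [hP0, Finset.card_image_of_injective _ Finset.singleton_injective,
          Finset.card_univ, Fintype.card_fin]
      have hcover0 : ∀ i : Fin p, ∃ C ∈ P 0, i ∈ C := by
        intro i
        exact ⟨{i}, (hmem0 _).mpr ⟨i, rfl⟩, Finset.mem_singleton_self i⟩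
      have hfine0 : ∀ C ∈ P 0, ∃ Cs ∈ Pstar, C ⊆ Cs := by
        intro C hC
        obtain ⟨i, rfl⟩ := (hmem0 C).mp hC
        obtain ⟨Ci, hCi, hiCi⟩ := hPstar_cover i
        exact ⟨Ci, hCi, Finset.singleton_subset_iff.mpr hiCi⟩
      refine ⟨by omega, ?_, ?_, hcover0, ?_, fun _ => hfine0, ?_⟩
      · intro C hC
        obtain ⟨i, rfl⟩ := (hmem0 C).mp hC
        exact ⟨i, Finset.mem_singleton_self i⟩
      · intro C hC C' hC' hne
        obtain ⟨i, rfl⟩ := (hmem0 C).mp hC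
        obtain ⟨j, rfl⟩ := (hmem0 C').mp hC'
        have hij : i ≠ j := fun hij => hne (by rw [hij])
        exact Finset.disjoint_singleton.mpr hij
      · intro C hC C' hC' hne
        obtain ⟨i, rfl⟩ := (hmem0 C).mp hC
        obtain ⟨j, rfl⟩ := (hmem0 C').mp hC'
        have hij : i ≠ j := fun hij => hne (by rw [hij])
        constructor
        · rintro ⟨Cs, hCs, h1, h2⟩
          rw [hDist0]
          exact hdtrue Cs hCs i (h1 (Finset.mem_singleton_self i)) j
            (h2 (Finset.mem_singleton_self j)) hij
        · intro hno
          rw [hDist0]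
          obtain ⟨Ci, hCi, hiCi⟩ := hPstar_cover i
          obtain ⟨Cj, hCj, hjCj⟩ := hPstar_cover j
          have hne' : Ci ≠ Cj := by
            rintro rfl
            exact hno ⟨Ci, hCi, Finset.singleton_subset_iff.mpr hiCi,
              Finset.singleton_subset_iff.mpr hjCj⟩
          exact hdfalse Ci hCi Cj hCj hne' i hiCi j hjCj
      · intro hle C hC Cs hCs hnd
        have hPeq : P 0 = Pstar := hfinal _ (by omega) hcover0 hfine0
        rw [hPeq] at hC
        rcases eq_or_ne Cs C with rfl | hne
        · exact Finset.Subset.refl _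
        · exact absurd (hPstar_disjoint Cs hCs C hC hne) hnd
    | succ s ih =>
      intro hs1
      have hs : s < p := by omega
      obtain ⟨hcard, hne, hdisj, hcover, hdist, hfine, hcoarse⟩ := ih hs
      obtain ⟨h1mem, h2mem, hne12, hmin, hh, hPsucc, hrecur, hkeep⟩ := hstep s hs1
      set U := C₁ s ∪ C₂ s with hU
      have hne1 : (C₁ s).Nonempty := hne _ h1mem
      have hne2 : (C₂ s).Nonempty := hne _ h2mem
      have hmem' : ∀ C, C ∈ P (s + 1) ↔ C = U ∨ (C ∈ P s ∧ C ≠ C₁ s ∧ C ≠ C₂ s) := by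
        intro C
        rw [hPsucc]
        simp only [Finset.mem_insert, Finset.mem_erase]
        constructor
        · rintro (hc | ⟨h2, h1, hm⟩)
          · exact Or.inl hc
          · exact Or.inr ⟨hm, h1, h2⟩
        · rintro (hc | ⟨hm, h1, h2⟩)
          · exact Or.inl hc
          · exact Or.inr ⟨h2, h1, hm⟩
      have hUnot : U ∉ ((P s).erase (C₁ s)).erase (C₂ s) := by
        intro hmem
        rw [Finset.mem_erase, Finset.mem_erase] at hmem
        obtain ⟨hne2', hne1', hmemP⟩ := hmem
        obtain ⟨x, hx⟩ := hne1
        exact Finset.disjoint_left.mp (hdisj U hmemP (C₁ s) h1mem hne1')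
          (Finset.mem_union_left _ hx) hx
      have htwo : 1 < (P s).card :=
        Finset.one_lt_card.mpr ⟨_, h1mem, _, h2mem, hne12⟩
      have hcard1 : (P (s + 1)).card + (s + 1) = p := by
        rw [hPsucc, Finset.card_insert_of_notMem hUnot,
          Finset.card_erase_of_mem (Finset.mem_erase.mpr ⟨Ne.symm hne12, h2mem⟩),
          Finset.card_erase_of_mem h1mem]
        omega
      have hne' : ∀ C ∈ P (s + 1), C.Nonempty := by
        intro C hC
        rcases (hmem' C).mp hC with rfl | ⟨hC, _, _⟩
        · exact hne1.mono Finset.subset_union_left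
        · exact hne C hC
      have hdisj' : ∀ C ∈ P (s + 1), ∀ C' ∈ P (s + 1), C ≠ C' → Disjoint C C' := by
        intro C hC C' hC' hCC'
        rcases (hmem' C).mp hC with rfl | ⟨hC, hC1, hC2⟩
        · rcases (hmem' C').mp hC' with rfl | ⟨hC', hC'1, hC'2⟩
          · exact absurd rfl hCC'
          · exact Finset.disjoint_union_left.mpr
              ⟨hdisj _ h1mem _ hC' (Ne.symm hC'1), hdisj _ h2mem _ hC' (Ne.symm hC'2)⟩
        · rcases (hmem' C').mp hC' with rfl | ⟨hC', _, _⟩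
          · exact Finset.disjoint_union_right.mpr
              ⟨hdisj _ hC _ h1mem hC1, hdisj _ hC _ h2mem hC2⟩
          · exact hdisj _ hC _ hC' hCC'
      have hcover' : ∀ i : Fin p, ∃ C ∈ P (s + 1), i ∈ C := by
        intro i
        obtain ⟨C, hC, hiC⟩ := hcover i
        rcases eq_or_ne C (C₁ s) with rfl | hC1
        · exact ⟨U, (hmem' U).mpr (Or.inl rfl), Finset.mem_union_left _ hiC⟩
        rcases eq_or_ne C (C₂ s) with rfl | hC2
        · exact ⟨U, (hmem' U).mpr (Or.inl rfl), Finset.mem_union_right _ hiC⟩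
        · exact ⟨C, (hmem' C).mpr (Or.inr ⟨hC, hC1, hC2⟩), hiC⟩
      -- generic reduction of the distance invariant to the new-old case
      have hdistgen :
          (∀ C ∈ P s, C ≠ C₁ s → C ≠ C₂ s →
            (InSame Pstar U C → Dist (s + 1) U C ≤ dtrue) ∧
            (¬ InSame Pstar U C → dfalse ≤ Dist (s + 1) U C)) →
          ∀ C ∈ P (s + 1), ∀ C' ∈ P (s + 1), C ≠ C' →
            (InSame Pstar C C' → Dist (s + 1) C C' ≤ dtrue) ∧
            (¬ InSame Pstar C C' → dfalse ≤ Dist (s + 1) C C') := by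
        intro hnewold C hC C' hC' hCC'
        rcases (hmem' C).mp hC with rfl | ⟨hCP, hCa, hCb⟩
        · rcases (hmem' C').mp hC' with rfl | ⟨hC'P, hC'a, hC'b⟩
          · exact absurd rfl hCC'
          · exact hnewold C' hC'P hC'a hC'b
        · rcases (hmem' C').mp hC' with rfl | ⟨hC'P, hC'a, hC'b⟩
          · have hsym := (hrecur C hCP hCa hCb).2
            have hmain := hnewold C hCP hCa hCb
            constructor
            · rintro ⟨E, hE, h1, h2⟩
              rw [hsym]; exact hmain.1 ⟨E, hE, h2, h1⟩
            · intro hno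
              rw [hsym]
              exact hmain.2 (fun ⟨E, hE, h1, h2⟩ => hno ⟨E, hE, h2, h1⟩)
          · rw [hkeep C hCP C' hC'P hCa hCb hC'a hC'b]
            exact hdist C hCP C' hC'P hCC'
      by_cases hphase : s + 1 ≤ p - T
      · -- fine phase
        have hfineS := hfine (by omega)
        obtain ⟨A, hA, A', hA', hAne, hASame⟩ := hpigeon (P s) (by omega) hfineS
        have hAle : Dist s A A' ≤ dtrue := (hdist A hA A' hA' hAne).1 hASame
        have hminle : Dist s (C₁ s) (C₂ s) ≤ dtrue :=
          le_trans (hmin A hA A' hA' hAne) hAle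
        have hSame12 : InSame Pstar (C₁ s) (C₂ s) := by
          by_contra hno
          have := (hdist _ h1mem _ h2mem hne12).2 hno
          linarith
        obtain ⟨Cs, hCsP, hsub1, hsub2⟩ := hSame12
        have hUsub : U ⊆ Cs := Finset.union_subset hsub1 hsub2
        have hfine' : ∀ C ∈ P (s + 1), ∃ E ∈ Pstar, C ⊆ E := by
          intro C hC
          rcases (hmem' C).mp hC with rfl | ⟨hC, _, _⟩
          · exact ⟨Cs, hCsP, hUsub⟩
          · exact hfineS C hC
        have hnewold : ∀ C ∈ P s, C ≠ C₁ s → C ≠ C₂ s →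
            (InSame Pstar U C → Dist (s + 1) U C ≤ dtrue) ∧
            (¬ InSame Pstar U C → dfalse ≤ Dist (s + 1) U C) := by
          intro C hC hC1 hC2
          obtain ⟨hrec, _⟩ := hrecur C hC hC1 hC2
          constructor
          · rintro ⟨E, hE, hUE, hCE⟩
            have e1 : Dist s (C₁ s) C ≤ dtrue :=
              (hdist _ h1mem _ hC (Ne.symm hC1)).1
                ⟨E, hE, Finset.Subset.trans Finset.subset_union_left hUE, hCE⟩
            have e2 : Dist s (C₂ s) C ≤ dtrue :=
              (hdist _ h2mem _ hC (Ne.symm hC2)).1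
                ⟨E, hE, Finset.Subset.trans Finset.subset_union_right hUE, hCE⟩
            rw [hrec]; exact hcombo_le _ _ _ e1 e2
          · intro hno
            have e1 : ¬ InSame Pstar (C₁ s) C := by
              rintro ⟨E, hE, h1E, hCE⟩
              obtain ⟨x, hx⟩ := hne1
              have hECs : E = Cs := huniq2 _ hE _ hCsP x (h1E hx) (hsub1 hx)
              exact hno ⟨Cs, hCsP, hUsub, hECs ▸ hCE⟩
            have e2 : ¬ InSame Pstar (C₂ s) C := by
              rintro ⟨E, hE, h2E, hCE⟩
              obtain ⟨x, hx⟩ := hne2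
              have hECs : E = Cs := huniq2 _ hE _ hCsP x (h2E hx) (hsub2 hx)
              exact hno ⟨Cs, hCsP, hUsub, hECs ▸ hCE⟩
            have f1 := (hdist _ h1mem _ hC (Ne.symm hC1)).2 e1
            have f2 := (hdist _ h2mem _ hC (Ne.symm hC2)).2 e2
            rw [hrec]; exact hcombo_ge _ _ _ f1 f2
        refine ⟨hcard1, hne', hdisj', hcover', hdistgen hnewold, fun _ => hfine', ?_⟩
        intro hge C hC Cs' hCs' hnd
        have hPeq : P (s + 1) = Pstar := hfinal _ (by omega) hcover' hfine'
        rw [hPeq] at hC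
        rcases eq_or_ne Cs' C with rfl | hne''
        · exact Finset.Subset.refl _
        · exact absurd (hPstar_disjoint Cs' hCs' C hC hne'') hnd
      · -- coarse phase: p - T ≤ s
        have hcoarseS := hcoarse (by omega)
        have hnoSame : ∀ C ∈ P s, ∀ C' ∈ P s, C ≠ C' → ¬ InSame Pstar C C' := by
          intro C hC C' hC' hCC'
          rintro ⟨E, hE, h1, h2⟩
          obtain ⟨x, hx⟩ := hne C hC
          obtain ⟨x', hx'⟩ := hne C' hC'
          obtain ⟨y, hy⟩ := hPstar_nonempty E hE
          have hEC : E ⊆ C := hcoarseS C hC E hE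
            (fun hd => Finset.disjoint_left.mp hd (h1 hx) hx)
          have hEC' : E ⊆ C' := hcoarseS C' hC' E hE
            (fun hd => Finset.disjoint_left.mp hd (h2 hx') hx')
          exact Finset.disjoint_left.mp (hdisj C hC C' hC' hCC') (hEC hy) (hEC' hy)
        have hnoSameU : ∀ C ∈ P s, C ≠ C₁ s → C ≠ C₂ s → ¬ InSame Pstar U C := by
          rintro C hC hC1 hC2 ⟨E, hE, hUE, hCE⟩
          exact hnoSame (C₁ s) h1mem C hC (Ne.symm hC1)
            ⟨E, hE, Finset.Subset.trans Finset.subset_union_left hUE, hCE⟩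
        have hnewold : ∀ C ∈ P s, C ≠ C₁ s → C ≠ C₂ s →
            (InSame Pstar U C → Dist (s + 1) U C ≤ dtrue) ∧
            (¬ InSame Pstar U C → dfalse ≤ Dist (s + 1) U C) := by
          intro C hC hC1 hC2
          obtain ⟨hrec, _⟩ := hrecur C hC hC1 hC2
          refine ⟨fun hin => absurd hin (hnoSameU C hC hC1 hC2), fun _ => ?_⟩
          have f1 := (hdist _ h1mem _ hC (Ne.symm hC1)).2
            (hnoSame _ h1mem _ hC (Ne.symm hC1))
          have f2 := (hdist _ h2mem _ hC (Ne.symm hC2)).2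
            (hnoSame _ h2mem _ hC (Ne.symm hC2))
          rw [hrec]; exact hcombo_ge _ _ _ f1 f2
        refine ⟨hcard1, hne', hdisj', hcover', hdistgen hnewold,
          fun hle => absurd hle (by omega), ?_⟩
        intro _ C hC Cs' hCs' hnd
        rcases (hmem' C).mp hC with rfl | ⟨hCP, hCa, hCb⟩
        · obtain ⟨x, hxCs, hxU⟩ := Finset.not_disjoint_iff.mp hnd
          rcases Finset.mem_union.mp hxU with hx1 | hx2
          · exact Finset.Subset.trans
              (hcoarseS _ h1mem Cs' hCs'
                (fun hd => Finset.disjoint_left.mp hd hxCs hx1))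
              Finset.subset_union_left
          · exact Finset.Subset.trans
              (hcoarseS _ h2mem Cs' hCs'
                (fun hd => Finset.disjoint_left.mp hd hxCs hx2))
              Finset.subset_union_right
        · exact hcoarseS C hCP Cs' hCs' hnd
  refine ⟨?_, ?_, ?_⟩
  · rintro s hs1 ⟨Cs, hCs, hsub⟩
    obtain ⟨hcard, hne, hdisj, hcover, hdist, hfine, hcoarse⟩ := key s (by omega)
    obtain ⟨h1mem, h2mem, hne12, hmin, hh, -⟩ := hstep s hs1
    rw [hh]
    exact (hdist _ h1mem _ h2mem hne12).1
      ⟨Cs, hCs, Finset.Subset.trans Finset.subset_union_left hsub,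
        Finset.Subset.trans Finset.subset_union_right hsub⟩
  · intro s hs1 hnosub
    obtain ⟨hcard, hne, hdisj, hcover, hdist, hfine, hcoarse⟩ := key s (by omega)
    obtain ⟨h1mem, h2mem, hne12, hmin, hh, -⟩ := hstep s hs1
    rw [hh]
    refine (hdist _ h1mem _ h2mem hne12).2 ?_
    rintro ⟨E, hE, h1, h2⟩
    exact hnosub E hE (Finset.union_subset h1 h2)
  · obtain ⟨hcard, hne, hdisj, hcover, hdist, hfine, hcoarse⟩ := key (p - T) (by omega)
    exact hfinal _ (by omega) hcover (hfine le_rfl)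
end
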